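/- Let A, B, C be groupoids and a : C → A, b : C → B functors that are bijective on objects. Then the pushout A *_C B of a and b in the category of groupoids is also a 2-pushout (bicolimit pushout) in the 2-category of groupoids: for every groupoid D, every pair of functors f : A → D, g : B → D, and every natural isomorphism α : g ∘ b ≅ f ∘ a, there exists a functor h : A *_C B → D together with natural isomorphisms h ∘ i_A ≅ f and h ∘ i_B ≅ g compatible with α, and h is unique up to a unique natural isomorphism compatible with these data. -/

import Mathlib

open CategoryTheory
universe u v w w'

def IndG (X : Type w) : Type w := X

instance indGroupoid (X : Type w) : Groupoid.{w'} (IndG X) where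
  Hom _ _ := PUnit.{w'+1}
  id _ := ⟨⟩
  comp _ _ := ⟨⟩
  inv _ := ⟨⟩

def indF {X : Type*} [Category X] {Y : Type w} (o : X → Y) :
    @CategoryTheory.Functor X _ (IndG Y) (indGroupoid.{w, w'} Y).toCategory where
  obj := o
  map _ := ⟨⟩

theorem indF_ext {X : Type*} [Category X] {Y : Type w}
    (F G : @CategoryTheory.Functor X _ (IndG Y) (indGroupoid.{w, w'} Y).toCategory)
    (h : ∀ x, F.obj x = G.obj x) : F = G := by
  exact CategoryTheory.Functor.ext h (by intros; rfl)

def reObj {X D : Type*} [Category X] [Category D] (F : X ⥤ D) (o : X → D)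
    (e : ∀ x, F.obj x ≅ o x) : X ⥤ D where
  obj := o
  map {x y} φ := (e x).inv ≫ F.map φ ≫ (e y).hom
  map_id := by intro x; simp
  map_comp := by intros; simp

def reObjIso {X D : Type*} [Category X] [Category D] (F : X ⥤ D) (o : X → D)
    (e : ∀ x, F.obj x ≅ o x) : F ≅ reObj F o e :=
  NatIso.ofComponents e (by intros; simp [reObj])

lemma reObj_map {X D : Type*} [Category X] [Category D] (F : X ⥤ D) (o : X → D)
    (e : ∀ x, F.obj x ≅ o x) {x y : X} (φ : x ⟶ y) :
    (reObj F o e).map φ = (e x).inv ≫ F.map φ ≫ (e y).hom := rfl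

lemma comp_reObj_eq {X Y D : Type*} [Category X] [Category Y] [Category D]
    (u : X ⥤ Y) (F : Y ⥤ D) (o : Y → D) (e : ∀ y, F.obj y ≅ o y) (K : X ⥤ D)
    (ob : ∀ x, o (u.obj x) = K.obj x)
    (mp : ∀ {x x'} (φ : x ⟶ x'),
      (e (u.obj x)).inv ≫ F.map (u.map φ) ≫ (e (u.obj x')).hom =
        eqToHom (ob x) ≫ K.map φ ≫ eqToHom (ob x').symm) :
    u ⋙ reObj F o e = K :=
  CategoryTheory.Functor.ext ob (fun _ _ φ => mp φ)

/-- Component of a natural transformation at propositionally equal objects. -/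
lemma app_congr {X D : Type*} [Category X] [Category D] {F G : X ⥤ D} (t : F ⟶ G)
    {x y : X} (h : x = y) :
    t.app x = eqToHom (by rw [h]) ≫ t.app y ≫ eqToHom (by rw [h]) := by
  subst h; simp

theorem pushout_of_bijOnObj_is_bipushout
    {A B C P : Type u} [Groupoid.{v} A] [Groupoid.{v} B] [Groupoid.{v} C]
    [Groupoid.{v} P]
    (a : C ⥤ A) (b : C ⥤ B) (iA : A ⥤ P) (iB : B ⥤ P)
    (ha : Function.Bijective a.obj) (hb : Function.Bijective b.obj)
    (hcomm : a ⋙ iA = b ⋙ iB)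
    (hpush : ∀ {D : Type w} [Groupoid.{w'} D] (f : A ⥤ D) (g : B ⥤ D),
      a ⋙ f = b ⋙ g → ∃! h : P ⥤ D, iA ⋙ h = f ∧ iB ⋙ h = g) :
    ∀ {D : Type w} [Groupoid.{w'} D] (f : A ⥤ D) (g : B ⥤ D)
      (α : b ⋙ g ≅ a ⋙ f),
      ∃ (h : P ⥤ D) (ηA : iA ⋙ h ≅ f) (ηB : iB ⋙ h ≅ g),
        (Functor.isoWhiskerLeft b ηB ≪≫ α =
          eqToIso (by rw [← Functor.assoc, ← hcomm, Functor.assoc]) ≪≫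
            Functor.isoWhiskerLeft a ηA) ∧
        ∀ (h' : P ⥤ D) (ηA' : iA ⋙ h' ≅ f) (ηB' : iB ⋙ h' ≅ g),
          (Functor.isoWhiskerLeft b ηB' ≪≫ α =
            eqToIso (by rw [← Functor.assoc, ← hcomm, Functor.assoc]) ≪≫
              Functor.isoWhiskerLeft a ηA') →
          ∃! δ : h ≅ h',
            Functor.isoWhiskerLeft iA δ ≪≫ ηA' = ηA ∧ Functor.isoWhiskerLeft iB δ ≪≫ ηB' = ηB := by
  intro D _ f g α
  -- notation for the inverse of `b` on objects
  set eb : C ≃ B := Equiv.ofBijective b.obj hb with heb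
  set σ : B → C := fun y => eb.symm y with hσ
  have σy : ∀ y, b.obj (σ y) = y := fun y => eb.apply_symm_apply y
  have σb : ∀ c, σ (b.obj c) = c := fun c => eb.symm_apply_apply c
  have hcommobj : ∀ c, iA.obj (a.obj c) = iB.obj (b.obj c) :=
    fun c => Functor.congr_obj hcomm c
  -- `iA` is surjective on objects
  have hPsurj : ∀ p : P, ∃ x : A, iA.obj x = p := by
    obtain ⟨h0, ⟨hf0, hg0⟩, huniq⟩ := hpush (D := IndG (ULift.{w} Prop))
      (indF fun _ => ⟨True⟩) (indF fun _ => ⟨True⟩)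
      (indF_ext _ _ fun _ => rfl)
    have h1 : indF (fun p : P => (⟨∃ x : A, iA.obj x = p⟩ : ULift Prop)) = h0 := by
      apply huniq
      constructor
      · apply indF_ext
        intro x
        exact congrArg ULift.up (eq_true ⟨x, rfl⟩)
      · apply indF_ext
        intro y
        exact congrArg ULift.up (eq_true ⟨a.obj (σ y), by rw [hcommobj (σ y), σy]⟩)
    have h2 : indF (fun _ : P => (⟨True⟩ : ULift Prop)) = h0 := by
      apply huniq
      exact ⟨indF_ext _ _ fun _ => rfl, indF_ext _ _ fun _ => rfl⟩
    intro p
    have h3 : (⟨∃ x : A, iA.obj x = p⟩ : ULift Prop) = ⟨True⟩ :=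
      Functor.congr_obj (h1.trans h2.symm) p
    exact of_eq_true (congrArg ULift.down h3)
  -- `iA` is injective on objects
  have hPinj : Function.Injective iA.obj := by
    intro x x' hxx
    obtain ⟨h0, ⟨hf0, hg0⟩, -⟩ := hpush (D := IndG (ULift.{w} Prop))
      (indF fun z => ⟨z = x'⟩) (indF fun y => ⟨a.obj (σ y) = x'⟩)
      (indF_ext _ _ fun c => congrArg ULift.up (by rw [σb]))
    have e1 : (⟨x = x'⟩ : ULift Prop) = ⟨x' = x'⟩ := by
      have q1 := Functor.congr_obj hf0 x
      have q2 := Functor.congr_obj hf0 x'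
      have q3 : h0.obj (iA.obj x) = h0.obj (iA.obj x') := by rw [hxx]
      exact q1.symm.trans (q3.trans q2)
    exact cast (congrArg ULift.down e1).symm rfl
  -- inverse of `iA` on objects
  obtain ⟨τ, Aτ⟩ : ∃ τ : P → A, ∀ p, iA.obj (τ p) = p :=
    ⟨fun p => (hPsurj p).choose, fun p => (hPsurj p).choose_spec⟩
  have τA : ∀ x, τ (iA.obj x) = x := fun x => hPinj (Aτ (iA.obj x))
  have τB : ∀ y, τ (iB.obj y) = a.obj (σ y) := by
    intro y
    have h1 : iA.obj (a.obj (σ y)) = iB.obj y := by rw [hcommobj, σy]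
    rw [← h1, τA]
  -- the twisted copy `g'` of `g`, strictly compatible with `f`
  set e : ∀ y : B, g.obj y ≅ f.obj (a.obj (σ y)) :=
    fun y => eqToIso (congrArg g.obj (σy y)).symm ≪≫ α.app (σ y) with he
  have ehom : ∀ y, (e y).hom =
      eqToHom (congrArg g.obj (σy y)).symm ≫ α.hom.app (σ y) := by
    intro y; rw [he]; simp
  have einv : ∀ y, (e y).inv =
      α.inv.app (σ y) ≫ eqToHom (congrArg g.obj (σy y)) := by
    intro y; rw [he]; simp
  set g' : B ⥤ D := reObj g _ e with hg'def
  have obg : ∀ c, f.obj (a.obj (σ (b.obj c))) = (a ⋙ f).obj c := fun c => by rw [σb]; rfl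
  have hbg' : b ⋙ g' = a ⋙ f := by
    refine comp_reObj_eq b g _ e (a ⋙ f) obg ?_
    intro c c' φ
    rw [ehom, einv]
    have key1 : ∀ (c c' : C) (φ : c ⟶ c') (d d' : C) (_ : d = c) (_ : d' = c')
        (q1 : g.obj (b.obj d) = g.obj (b.obj c)) (q2 : g.obj (b.obj c') = g.obj (b.obj d'))
        (q3 : f.obj (a.obj d) = (a ⋙ f).obj c) (q4 : (a ⋙ f).obj c' = f.obj (a.obj d')),
        (α.inv.app d ≫ eqToHom q1) ≫ g.map (b.map φ) ≫ (eqToHom q2 ≫ α.hom.app d') =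
          eqToHom q3 ≫ (a ⋙ f).map φ ≫ eqToHom q4 := by
      rintro c c' φ d d' rfl rfl q1 q2 q3 q4
      simp only [eqToHom_refl, Category.comp_id, Category.id_comp]
      simpa using NatIso.naturality_1 α φ
    exact key1 c c' φ _ _ (σb c) (σb c') _ _ _ _
  -- the strict pushout functor
  obtain ⟨h, ⟨hhA, hhB⟩, hhuniq⟩ := hpush f g' hbg'.symm
  refine ⟨h, eqToIso hhA, eqToIso hhB ≪≫ (reObjIso g _ e).symm, ?_, ?_⟩
  · -- compatibility with α
    apply Iso.ext
    apply NatTrans.ext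
    funext c
    simp only [Iso.trans_hom, NatTrans.comp_app, Functor.isoWhiskerLeft_hom, Functor.whiskerLeft_app,
      eqToIso.hom, eqToHom_app, Iso.symm_hom, reObjIso, NatIso.ofComponents_inv_app,
      einv, Category.assoc]
    have key2 : ∀ (c d : C) (_ : d = c)
        (q1 : h.obj (iB.obj (b.obj c)) = f.obj (a.obj d))
        (q2 : g.obj (b.obj d) = g.obj (b.obj c))
        (q3 : h.obj (iB.obj (b.obj c)) = h.obj (iA.obj (a.obj c)))
        (q4 : h.obj (iA.obj (a.obj c)) = f.obj (a.obj c)),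
        eqToHom q1 ≫ α.inv.app d ≫ eqToHom q2 ≫ α.hom.app c = eqToHom q3 ≫ eqToHom q4 := by
      rintro c d rfl q1 q2 q3 q4
      simp
    erw [@NatIso.ofComponents_inv_app]; simp only [einv]; erw [Category.assoc]
    exact key2 c _ (σb c) _ _ _ _
  · -- uniqueness part
    intro h' ηA' ηB' hα'
    have pfc : ∀ c, h'.obj (iB.obj (b.obj c)) = h'.obj (iA.obj (a.obj c)) :=
      fun c => by rw [hcommobj]
    have hα'c : ∀ c, ηB'.hom.app (b.obj c) ≫ α.hom.app c =
        eqToHom (pfc c) ≫ ηA'.hom.app (a.obj c) := by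
      intro c
      have q := congrArg (fun (i : b ⋙ (iB ⋙ h') ≅ a ⋙ f) => i.hom.app c) hα'
      simpa [eqToHom_app] using q
    have hα'cinv : ∀ c, ηA'.inv.app (a.obj c) =
        α.inv.app c ≫ ηB'.inv.app (b.obj c) ≫ eqToHom (pfc c) := by
      intro c
      rw [← cancel_mono (ηA'.hom.app (a.obj c))]
      simp only [Category.assoc]
      rw [← hα'c c]
      simp
    set ε : ∀ p : P, h'.obj p ≅ f.obj (τ p) :=
      fun p => eqToIso (congrArg h'.obj (Aτ p)).symm ≪≫ ηA'.app (τ p) with hε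
    have εhom : ∀ p, (ε p).hom =
        eqToHom (congrArg h'.obj (Aτ p)).symm ≫ ηA'.hom.app (τ p) := by
      intro p; rw [hε]; simp
    have εinv : ∀ p, (ε p).inv =
        ηA'.inv.app (τ p) ≫ eqToHom (congrArg h'.obj (Aτ p)) := by
      intro p; rw [hε]; simp
    set h'' : P ⥤ D := reObj h' _ ε with hh''
    have claimA : iA ⋙ h'' = f := by
      have obA : ∀ x, f.obj (τ (iA.obj x)) = f.obj x := fun x => by rw [τA]
      refine comp_reObj_eq iA h' _ ε f obA ?_
      intro x x' φ
      rw [εhom, εinv]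
      have keyA : ∀ (x x' : A) (φ : x ⟶ x') (d d' : A) (_ : d = x) (_ : d' = x')
          (q1 : h'.obj (iA.obj d) = h'.obj (iA.obj x))
          (q2 : h'.obj (iA.obj x') = h'.obj (iA.obj d'))
          (q3 : f.obj d = f.obj x) (q4 : f.obj x' = f.obj d'),
          (ηA'.inv.app d ≫ eqToHom q1) ≫ h'.map (iA.map φ) ≫ (eqToHom q2 ≫ ηA'.hom.app d') =
            eqToHom q3 ≫ f.map φ ≫ eqToHom q4 := by
        rintro x x' φ d d' rfl rfl q1 q2 q3 q4
        simp only [eqToHom_refl, Category.comp_id, Category.id_comp]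
        simpa using NatIso.naturality_1 ηA' φ
      exact keyA x x' φ _ _ (τA x) (τA x') _ _ _ _
    have claimB : iB ⋙ h'' = g' := by
      have obB : ∀ y, f.obj (τ (iB.obj y)) = g'.obj y := fun y => by
        rw [τB]; rw [hg'def]; rfl
      refine comp_reObj_eq iB h' _ ε g' obB ?_
      intro y y' ψ
      rw [εhom, εinv]
      have keyB : ∀ (k k' : C) (y y' : B) (_ : b.obj k = y) (_ : b.obj k' = y') (ψ : y ⟶ y')
          (d d' : A) (m m' : C)
          (_ : k = m) (_ : k' = m') (_ : a.obj k = d) (_ : a.obj k' = d')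
          (q1 : h'.obj (iA.obj d) = h'.obj (iB.obj y))
          (q2 : h'.obj (iB.obj y') = h'.obj (iA.obj d'))
          (q3 : f.obj d = f.obj (a.obj m))
          (q4 : f.obj (a.obj m') = f.obj d')
          (q5 : g.obj (b.obj m) = g.obj y)
          (q6 : g.obj y' = g.obj (b.obj m')),
          (ηA'.inv.app d ≫ eqToHom q1) ≫ h'.map (iB.map ψ) ≫ (eqToHom q2 ≫ ηA'.hom.app d') =
            eqToHom q3 ≫ ((α.inv.app m ≫ eqToHom q5) ≫ g.map ψ ≫ (eqToHom q6 ≫ α.hom.app m')) ≫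
              eqToHom q4 := by
        rintro k k' y y' rfl rfl ψ d d' m m' rfl rfl rfl rfl q1 q2 q3 q4 q5 q6
        have hB := NatIso.naturality_1 ηB' ψ
        simp only [Functor.comp_map] at hB
        have hA'hom : ηA'.hom.app (a.obj k') =
            eqToHom (pfc k').symm ≫ ηB'.hom.app (b.obj k') ≫ α.hom.app k' := by
          rw [hα'c k']; simp
        simp only [eqToHom_refl, Category.comp_id, Category.id_comp, Category.assoc,
          hα'cinv, hA'hom, eqToHom_trans, eqToHom_trans_assoc]
        rw [← hB]
        simp
      exact keyB (σ y) (σ y') y y' (σy y) (σy y') ψ _ _ _ _ rfl rfl (τB y).symm (τB y').symm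
        _ _ _ _ (congrArg g.obj (σy y)) (congrArg g.obj (σy y')).symm
    have hEq : h'' = h := hhuniq h'' ⟨claimA, claimB⟩
    refine ⟨eqToIso hEq.symm ≪≫ (reObjIso h' _ ε).symm, ⟨?_, ?_⟩, ?_⟩
    · apply Iso.ext; apply NatTrans.ext; funext x
      simp only [Iso.trans_hom, NatTrans.comp_app, Functor.isoWhiskerLeft_hom, Functor.whiskerLeft_app,
        eqToIso.hom, eqToHom_app, Iso.symm_hom, reObjIso, NatIso.ofComponents_inv_app,
        εinv, Category.assoc]
      have keyC : ∀ (x d : A) (_ : x = d)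
          (q1 : h.obj (iA.obj x) = f.obj d)
          (q2 : h'.obj (iA.obj d) = h'.obj (iA.obj x))
          (q3 : h.obj (iA.obj x) = f.obj x),
          eqToHom q1 ≫ ηA'.inv.app d ≫ eqToHom q2 ≫ ηA'.hom.app x = eqToHom q3 := by
        rintro x d rfl q1 q2 q3; simp
      erw [@NatIso.ofComponents_inv_app]; simp only [εinv]; erw [Category.assoc]
      exact keyC x _ (τA x).symm _ _ _
    · apply Iso.ext; apply NatTrans.ext; funext y
      simp only [Iso.trans_hom, NatTrans.comp_app, Functor.isoWhiskerLeft_hom, Functor.whiskerLeft_app,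
        eqToIso.hom, eqToHom_app, Iso.symm_hom, reObjIso, NatIso.ofComponents_inv_app,
        εinv, einv, Category.assoc]
      have keyD : ∀ (k : C) (y : B) (_ : b.obj k = y) (d : A) (_ : a.obj k = d)
          (q1 : h.obj (iB.obj y) = f.obj d)
          (q2 : h'.obj (iA.obj d) = h'.obj (iB.obj y))
          (q3 : h.obj (iB.obj y) = f.obj (a.obj k))
          (q4 : g.obj (b.obj k) = g.obj y),
          eqToHom q1 ≫ ηA'.inv.app d ≫ eqToHom q2 ≫ ηB'.hom.app y =
            eqToHom q3 ≫ α.inv.app k ≫ eqToHom q4 := by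
        rintro k y rfl d rfl q1 q2 q3 q4
        rw [hα'cinv k]
        simp
      erw [@NatIso.ofComponents_inv_app, @NatIso.ofComponents_inv_app]; simp only [εinv, einv]; erw [Category.assoc]
      exact keyD (σ y) y (σy y) _ (τB y).symm _ _ _ _
    · rintro δ' ⟨c1, c2⟩
      apply Iso.ext; apply NatTrans.ext; funext p
      obtain ⟨x, rfl⟩ := hPsurj p
      have d1 := congrArg (fun (i : iA ⋙ h ≅ f) => i.hom.app x) c1
      simp only [Iso.trans_hom, NatTrans.comp_app, Functor.isoWhiskerLeft_hom, Functor.whiskerLeft_app,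
        eqToIso.hom, eqToHom_app] at d1
      rw [← cancel_mono (ηA'.hom.app x), d1]
      simp only [Iso.trans_hom, NatTrans.comp_app, eqToIso.hom, eqToHom_app, Iso.symm_hom,
        reObjIso, NatIso.ofComponents_inv_app, εinv, Category.assoc]
      have keyE : ∀ (x d : A) (_ : x = d)
          (q1 : h.obj (iA.obj x) = f.obj d)
          (q2 : h'.obj (iA.obj d) = h'.obj (iA.obj x))
          (q3 : h.obj (iA.obj x) = f.obj x),
          eqToHom q3 = eqToHom q1 ≫ ηA'.inv.app d ≫ eqToHom q2 ≫ ηA'.hom.app x := by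
        rintro x d rfl q1 q2 q3; simp
      erw [@NatIso.ofComponents_inv_app]; simp only [εinv]; erw [Category.assoc]
      exact keyE x _ (τA x).symm _ _ _
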